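/- Let t ≥ 2 and let k_1 < k_2 < ... < k_t be natural numbers with 1 ≤ k_1 and gcd(k_1, ..., k_t) = 1. Every complex root z of the polynomial χ_S(x) = t·x^{k_t} + ∑_{i=1}^{t-1} x^{k_t - k_i} + 1 satisfies |z| < 1, except possibly z = -1, and z = -1 is a root only in the case where all of k_1, ..., k_t are odd. -/

import Mathlib

private lemma unit_re_one {u : ℂ} (h1 : ‖u‖ = 1) (h2 : u.re = 1) : u = 1 := by
  have hn : Complex.normSq u = 1 := by
    rw [← Complex.sq_norm, h1]; norm_num
  have hsq := Complex.normSq_apply u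
  have him : u.im = 0 := by nlinarith
  exact Complex.ext (by simpa using h2) (by simpa using him)

private lemma key (t : ℕ) (ht : 2 ≤ t) (k : ℕ → ℕ)
    (hmono : ∀ i j, 1 ≤ i → i < j → j ≤ t → k i < k j)
    (z : ℂ) (hz : ‖z‖ = 1)
    (heq : (t : ℂ) * z ^ (k t) + (∑ i ∈ Finset.Icc 1 (t - 1), z ^ (k t - k i)) + 1 = 0) :
    ∀ i, 1 ≤ i → i ≤ t → z ^ (k i) = -1 := by
  have habs : ∀ n : ℕ, ‖z ^ n‖ = 1 := fun n => by rw [norm_pow, hz, one_pow]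
  set c : ℂ := (starRingEnd ℂ) (z ^ (k t)) with hc
  have habsc : ‖c‖ = 1 := by rw [hc, Complex.norm_conj]; exact habs _
  have hmulc : z ^ (k t) * c = 1 := by
    rw [hc, Complex.mul_conj, ← Complex.sq_norm, habs]; norm_num
  set A := ∑ i ∈ Finset.Icc 1 (t - 1), z ^ (k t - k i) with hA
  have hsum : -(A * c) + -c = (t : ℂ) := by
    linear_combination (-c) * heq + (t : ℂ) * hmulc
  have hexp : -(A * c) = ∑ i ∈ Finset.Icc 1 (t - 1), -(z ^ (k t - k i) * c) := by
    rw [hA, Finset.sum_mul, ← Finset.sum_neg_distrib]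
  have hre : (∑ i ∈ Finset.Icc 1 (t - 1), (-(z ^ (k t - k i) * c)).re) + (-c).re = (t : ℝ) := by
    have := congrArg Complex.re hsum
    rw [hexp] at this
    simpa [Complex.re_sum] using this
  have habsu : ∀ i : ℕ, ‖(-(z ^ (k t - k i) * c))‖ = 1 := fun i => by
    rw [norm_neg, norm_mul, habs, habsc, one_mul]
  have hbound : ∀ i ∈ Finset.Icc 1 (t - 1), (-(z ^ (k t - k i) * c)).re ≤ 1 := fun i _ =>
    (Complex.re_le_norm _).trans (le_of_eq (habsu i))
  have hbc : (-c).re ≤ 1 := (Complex.re_le_norm _).trans (by rw [norm_neg, habsc])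
  have hcard : ((Finset.Icc 1 (t - 1)).card : ℝ) = (t : ℝ) - 1 := by
    rw [Nat.card_Icc]
    have : t - 1 + 1 - 1 = t - 1 := by omega
    rw [this, Nat.cast_sub (by omega)]
    norm_num
  -- sum of nonneg terms g i = 1 - re
  have hgsum : ∑ i ∈ Finset.Icc 1 (t - 1), (1 - (-(z ^ (k t - k i) * c)).re) = (-c).re - 1 := by
    rw [Finset.sum_sub_distrib, Finset.sum_const, nsmul_eq_mul, mul_one, hcard]
    linarith [hre]
  have hgnonneg : ∀ i ∈ Finset.Icc 1 (t - 1), 0 ≤ 1 - (-(z ^ (k t - k i) * c)).re :=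
    fun i hi => by linarith [hbound i hi]
  have hsumnonneg : 0 ≤ (-c).re - 1 := hgsum ▸ Finset.sum_nonneg hgnonneg
  have hcre : (-c).re = 1 := by linarith
  have hgzero : ∀ i ∈ Finset.Icc 1 (t - 1), 1 - (-(z ^ (k t - k i) * c)).re = 0 := by
    rw [← Finset.sum_eq_zero_iff_of_nonneg hgnonneg, hgsum, hcre]; ring
  have hceq : -c = 1 := unit_re_one (by rw [norm_neg]; exact habsc) hcre
  have hzkt : z ^ (k t) = -1 := by
    have : z ^ (k t) * c = 1 := hmulc
    have hcm : c = -1 := by linear_combination -hceq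
    rw [hcm] at this
    linear_combination -this
  have hunit : ∀ i ∈ Finset.Icc 1 (t - 1), z ^ (k t - k i) = 1 := by
    intro i hi
    have h0 := hgzero i hi
    have hre1 : (-(z ^ (k t - k i) * c)).re = 1 := by linarith
    have := unit_re_one (habsu i) hre1
    have hcm : c = -1 := by linear_combination -hceq
    rw [hcm] at this
    linear_combination this
  intro i h1 h2
  rcases eq_or_lt_of_le h2 with hi | hi
  · rw [hi]; exact hzkt
  · have hmem : i ∈ Finset.Icc 1 (t - 1) := Finset.mem_Icc.mpr ⟨h1, by omega⟩
    have hkle : k i ≤ k t := le_of_lt (hmono i t h1 hi le_rfl)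
    have : z ^ (k i) * z ^ (k t - k i) = z ^ (k t) := by
      rw [← pow_add, Nat.add_sub_cancel' hkle]
    rw [hunit i hmem, mul_one] at this
    rw [this, hzkt]

theorem stmt10 (t : ℕ) (ht : 2 ≤ t) (k : ℕ → ℕ)
    (hmono : ∀ i j, 1 ≤ i → i < j → j ≤ t → k i < k j)
    (hk1 : 1 ≤ k 1)
    (hgcd : Finset.gcd (Finset.Icc 1 t) k = 1) :
    (∀ z : ℂ, (t : ℂ) * z ^ (k t) + (∑ i ∈ Finset.Icc 1 (t - 1), z ^ (k t - k i)) + 1 = 0 →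
      z = -1 ∨ ‖z‖ < 1) ∧
    (((t : ℂ) * (-1 : ℂ) ^ (k t) + (∑ i ∈ Finset.Icc 1 (t - 1), (-1 : ℂ) ^ (k t - k i)) + 1 = 0) →
      ∀ i, 1 ≤ i → i ≤ t → Odd (k i)) := by
  have hkt1 : 1 ≤ k t := le_of_lt (lt_of_le_of_lt hk1 (hmono 1 t le_rfl (by omega) le_rfl))
  constructor
  · intro z heq
    rcases lt_trichotomy ‖z‖ 1 with hlt | heq1 | hgt
    · right; exact hlt
    · left
      have hki := key t ht k hmono z heq1 heq
      -- z ^ (k i) = -1 for all i in [1,t]; so z^(k i * 2) = 1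
      have hd : ∀ i ∈ Finset.Icc 1 t, orderOf z ∣ k i * 2 := by
        intro i hi
        rw [Finset.mem_Icc] at hi
        apply orderOf_dvd_of_pow_eq_one
        rw [pow_mul, hki i hi.1 hi.2, neg_one_sq]
      have hd2 : orderOf z ∣ 2 := by
        have := Finset.dvd_gcd hd
        rw [Finset.gcd_mul_right, hgcd, one_mul] at this
        simpa using this
      have hz2 : z ^ 2 = 1 := orderOf_dvd_iff_pow_eq_one.mp hd2
      have : z * z = 1 := by rw [← sq]; exact hz2
      rcases mul_self_eq_one_iff.mp this with h1 | h1
      · exfalso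
        have := hki 1 le_rfl (by omega)
        rw [h1, one_pow] at this
        norm_num at this
      · exact h1
    · exfalso
      set r := ‖z‖ with hr
      have hr1 : 1 ≤ r := le_of_lt hgt
      have hkipos : ∀ i, 1 ≤ i → i ≤ t → 1 ≤ k i := by
        intro i h1 h2
        rcases eq_or_lt_of_le h1 with h | h
        · exact h ▸ hk1
        · exact le_of_lt (lt_of_le_of_lt hk1 (hmono 1 i le_rfl h h2))
      have hpow1 : (1:ℝ) ≤ r ^ (k t - 1) := one_le_pow₀ hr1
      have hzeq : -((t:ℂ) * z ^ k t) = (∑ i ∈ Finset.Icc 1 (t - 1), z ^ (k t - k i)) + 1 := by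
        linear_combination -heq
      have h1 : (t:ℝ) * r ^ k t ≤ ((t:ℝ) - 1) * r ^ (k t - 1) + 1 := by
        have he : (t:ℝ) * r ^ k t
            = ‖((∑ i ∈ Finset.Icc 1 (t - 1), z ^ (k t - k i)) + 1)‖ := by
          rw [← hzeq, norm_neg, norm_mul, norm_pow, Complex.norm_natCast]
        rw [he]
        refine (norm_add_le _ _).trans ?_
        simp only [norm_one]
        gcongr ?_ + 1
        refine (norm_sum_le _ _).trans ?_
        refine (Finset.sum_le_card_nsmul _ _ (r ^ (k t - 1)) ?_).trans ?_
        · intro i hi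
          rw [norm_pow]
          refine pow_le_pow_right₀ hr1 ?_
          rw [Finset.mem_Icc] at hi
          have := hkipos i hi.1 (by omega)
          omega
        · rw [nsmul_eq_mul, Nat.card_Icc]
          have h3 : t - 1 + 1 - 1 = t - 1 := by omega
          rw [h3, Nat.cast_sub (by omega)]
          norm_num
      have hrpow : r ^ k t = r ^ (k t - 1) * r := by
        rw [← pow_succ, Nat.sub_add_cancel hkt1]
      rw [hrpow] at h1
      have ht2 : (2:ℝ) ≤ t := by exact_mod_cast ht
      nlinarith [hpow1, hgt, ht2, mul_le_mul_of_nonneg_left hpow1 (by linarith : (0:ℝ) ≤ (t:ℝ) - 1)]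
  · intro heq i h1 h2
    have hz : ‖(-1 : ℂ)‖ = 1 := by simp
    have := key t ht k hmono (-1) hz heq i h1 h2
    rcases Nat.even_or_odd (k i) with he | ho
    · exfalso
      rw [he.neg_one_pow] at this
      norm_num at this
    · exact ho
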